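/- There is a universal constant c > 0 such that for every n, every f : {−1,1}^n → [0,1], and every t > 0, setting s = −log(1 − e^{−t}), one has E_{Z∼μ_s}[ M(f_Z) ] ≥ c (e^{2t} − 1) Var(P_t f). -/

import Mathlib

open Real

/-- The `±1` value of a boolean coordinate. -/
noncomputable def bval (b : Bool) : ℝ := if b then 1 else -1

/-- Expectation with respect to the uniform measure on the discrete cube `{-1,1}^n`. -/
noncomputable def bExp (n : ℕ) (f : (Fin n → Bool) → ℝ) : ℝ :=
  (∑ x : Fin n → Bool, f x) / 2 ^ n

/-- Covariance on the discrete cube. -/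
noncomputable def bCov (n : ℕ) (f g : (Fin n → Bool) → ℝ) : ℝ :=
  bExp n (fun x => (f x - bExp n f) * (g x - bExp n g))

/-- Variance on the discrete cube. -/
noncomputable def bVar (n : ℕ) (f : (Fin n → Bool) → ℝ) : ℝ := bCov n f f

/-- The character `χ_S(x) = ∏_{i ∈ S} x_i`. -/
noncomputable def chi (n : ℕ) (S : Finset (Fin n)) (x : Fin n → Bool) : ℝ :=
  ∏ i ∈ S, bval (x i)

/-- The Fourier coefficient `f̂(S) = E[f χ_S]`. -/
noncomputable def fourierCoef (n : ℕ) (f : (Fin n → Bool) → ℝ) (S : Finset (Fin n)) : ℝ :=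
  bExp n (fun x => f x * chi n S x)

/-- The Bonami--Beckner semigroup `P_t f = Σ_S e^{-t|S|} f̂(S) χ_S`. -/
noncomputable def bP (n : ℕ) (t : ℝ) (f : (Fin n → Bool) → ℝ) : (Fin n → Bool) → ℝ :=
  fun x => ∑ S : Finset (Fin n), Real.exp (-t * S.card) * fourierCoef n f S * chi n S x

/-- A half-space `{x : ⟨a, x⟩ ≤ b}` in `{-1,1}^n`. -/
def IsHalfspaceB {n : ℕ} (A : Set (Fin n → Bool)) : Prop :=
  ∃ (a : Fin n → ℝ) (b : ℝ), A = {x | ∑ i, a i * bval (x i) ≤ b}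

/-- `M(g)`: the supremum over half-spaces `A` of `Cov(g, 1_A)`. -/
noncomputable def Mb (n : ℕ) (g : (Fin n → Bool) → ℝ) : ℝ :=
  ⨆ A : {A : Set (Fin n → Bool) // IsHalfspaceB A}, bCov n g (Set.indicator A.1 1)

/-- `z ⊘ x`: coordinates where `z` is `none` (i.e. 0) are filled in by `x`. -/
def oslash {n : ℕ} (z : Fin n → Option Bool) (x : Fin n → Bool) : Fin n → Bool :=
  fun i => (z i).getD (x i)

/-- The restriction `f_z(x) = f(z ⊘ x)`. -/
noncomputable def restrictF {n : ℕ} (f : (Fin n → Bool) → ℝ) (z : Fin n → Option Bool) :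
    (Fin n → Bool) → ℝ := fun x => f (oslash z x)

/-- The `μ_s`-probability of the restriction pattern `z ∈ {-1,0,1}^n`: each coordinate is
independently `0` (here `none`) with probability `e^{-s}`, and `±1` with probability
`(1-e^{-s})/2` each. -/
noncomputable def muWeight (n : ℕ) (s : ℝ) (z : Fin n → Option Bool) : ℝ :=
  ∏ i, if z i = none then Real.exp (-s) else (1 - Real.exp (-s)) / 2

/-- Expectation over a random restriction `Z ∼ μ_s`. -/
noncomputable def restExp (n : ℕ) (s : ℝ) (g : (Fin n → Option Bool) → ℝ) : ℝ :=
  ∑ z : Fin n → Option Bool, muWeight n s z * g z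

/-- `w₁(f) = Σ_i f̂({i})²`. -/
noncomputable def w1b (n : ℕ) (f : (Fin n → Bool) → ℝ) : ℝ :=
  ∑ i : Fin n, (fourierCoef n f {i}) ^ 2

/-- The boolean version of the ball example: `n = m²`, the coordinates are split into `m`
consecutive blocks `J_i = {j : j / m = i}` of size `m`, and
`B^{(m)} = {x : Σ_i (m^{-1/2} Σ_{j ∈ J_i} x_j)² ≤ m}`. -/
noncomputable def Bm (m : ℕ) : Set (Fin (m*m) → Bool) :=
  {x | ∑ i : Fin m,
    ((∑ j : Fin (m*m), if (j : ℕ) / m = (i : ℕ) then bval (x j) else 0) / Real.sqrt m) ^ 2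
      ≤ (m : ℝ)}

open Finset

section basic
variable {n : ℕ}

lemma bval_sq (b : Bool) : bval b * bval b = 1 := by cases b <;> simp [bval]

lemma bval_abs_le (b : Bool) : |bval b| ≤ 1 := by cases b <;> simp [bval]

lemma bExp_add (f g : (Fin n → Bool) → ℝ) :
    bExp n (fun x => f x + g x) = bExp n f + bExp n g := by
  simp [bExp, Finset.sum_add_distrib, add_div]

lemma bExp_sub (f g : (Fin n → Bool) → ℝ) :
    bExp n (fun x => f x - g x) = bExp n f - bExp n g := by
  simp [bExp, Finset.sum_sub_distrib, div_sub_div_same]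

lemma bExp_smul (c : ℝ) (f : (Fin n → Bool) → ℝ) :
    bExp n (fun x => c * f x) = c * bExp n f := by
  simp [bExp, ← Finset.mul_sum, mul_div_assoc]

lemma bExp_const (c : ℝ) : bExp n (fun _ => c) = c := by
  simp only [bExp, Finset.sum_const, Finset.card_univ, nsmul_eq_mul, Fintype.card_fun,
    Fintype.card_bool, Fintype.card_fin]
  rw [mul_comm, mul_div_assoc, Nat.cast_pow, Nat.cast_ofNat, div_self (by positivity), mul_one]

lemma bExp_sum {ι : Type*} (s : Finset ι) (F : ι → (Fin n → Bool) → ℝ) :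
    bExp n (fun x => ∑ i ∈ s, F i x) = ∑ i ∈ s, bExp n (F i) := by
  simp only [bExp, ← Finset.sum_div]
  rw [Finset.sum_comm]

lemma bExp_mono {f g : (Fin n → Bool) → ℝ} (h : ∀ x, f x ≤ g x) : bExp n f ≤ bExp n g := by
  apply div_le_div_of_nonneg_right ?_ (by positivity)
  · exact Finset.sum_le_sum fun x _ => h x
  
lemma abs_bExp_le (f : (Fin n → Bool) → ℝ) : |bExp n f| ≤ bExp n (fun x => |f x|) := by
  rw [bExp, bExp, abs_div, abs_of_pos (show (0:ℝ) < 2^n by positivity)]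
  apply div_le_div_of_nonneg_right ?_ (by positivity)
  exact Finset.abs_sum_le_sum_abs _ _

lemma bExp_prod (g : Fin n → Bool → ℝ) :
    bExp n (fun x => ∏ i, g i (x i)) = ∏ i, ((g i true + g i false) / 2) := by
  rw [bExp, ← Fintype.prod_sum g]
  rw [Finset.prod_div_distrib, Finset.prod_const]
  congr 1
  · congr 1; ext i; simp [Fintype.sum_bool]
  · simp [Finset.card_univ]
end basic

-- FOUR PART
section four
variable {n : ℕ}

lemma chi_mul_chi (S T : Finset (Fin n)) (x : Fin n → Bool) :
    chi n S x * chi n T x = ∏ i, ((if i ∈ S then bval (x i) else 1) * (if i ∈ T then bval (x i) else 1)) := by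
  rw [chi, chi, Finset.prod_mul_distrib, Finset.prod_ite_mem univ S (fun i => bval (x i)),
    Finset.prod_ite_mem univ T (fun i => bval (x i)), Finset.univ_inter, Finset.univ_inter]

lemma bExp_chi_mul_chi (S T : Finset (Fin n)) :
    bExp n (fun x => chi n S x * chi n T x) = if S = T then 1 else 0 := by
  have := bExp_prod (n := n)
    (fun i b => (if i ∈ S then bval b else 1) * (if i ∈ T then bval b else 1))
  simp only [chi_mul_chi]
  rw [this]
  have hfac : ∀ i : Fin n,
      ((if i ∈ S then bval true else 1) * (if i ∈ T then bval true else 1)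
        + (if i ∈ S then bval false else 1) * (if i ∈ T then bval false else 1)) / 2
      = if ((i ∈ S) ↔ (i ∈ T)) then 1 else 0 := by
    intro i
    by_cases hS : i ∈ S <;> by_cases hT : i ∈ T <;> simp [hS, hT, bval] <;> norm_num
  simp only [hfac]
  by_cases hST : S = T
  · subst hST; simp
  · rw [if_neg hST]
    obtain ⟨i, hi⟩ : ∃ i, ¬((i ∈ S) ↔ (i ∈ T)) := by
      by_contra h
      push_neg at h
      exact hST (Finset.ext fun i => (h i))
    exact Finset.prod_eq_zero (Finset.mem_univ i) (by rw [if_neg hi])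

lemma bExp_chi (S : Finset (Fin n)) : bExp n (chi n S) = if S = ∅ then 1 else 0 := by
  have := bExp_chi_mul_chi S (∅ : Finset (Fin n))
  simp [chi] at this; exact this

lemma chi_empty (x : Fin n → Bool) : chi n ∅ x = 1 := by simp [chi]

lemma fourierCoef_empty (f : (Fin n → Bool) → ℝ) : fourierCoef n f ∅ = bExp n f := by
  simp [fourierCoef, chi_empty]

lemma sum_chi_chi (x y : Fin n → Bool) :
    ∑ S : Finset (Fin n), chi n S x * chi n S y = if x = y then (2:ℝ)^n else 0 := by
  have : ∀ S : Finset (Fin n), chi n S x * chi n S y = ∏ i ∈ S, (bval (x i) * bval (y i)) := by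
    intro S; rw [chi, chi, ← Finset.prod_mul_distrib]
  simp only [this]
  have hprod := Fintype.prod_add (fun i : Fin n => bval (x i) * bval (y i)) (fun _ => (1:ℝ))
  simp only [Finset.prod_const_one, mul_one] at hprod
  rw [← hprod]
  by_cases hxy : x = y
  · subst hxy
    rw [if_pos rfl]
    have : ∀ i : Fin n, bval (x i) * bval (x i) + 1 = 2 := by
      intro i; rw [bval_sq]; norm_num
    simp only [this]
    simp [Finset.prod_const, Finset.card_univ]
  · rw [if_neg hxy]
    obtain ⟨i, hi⟩ : ∃ i, x i ≠ y i := by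
      by_contra h; push_neg at h; exact hxy (funext h)
    apply Finset.prod_eq_zero (Finset.mem_univ i)
    cases hx : x i <;> cases hy : y i <;> simp_all [bval] <;> norm_num

lemma fourier_inversion (f : (Fin n → Bool) → ℝ) (x : Fin n → Bool) :
    f x = ∑ S : Finset (Fin n), fourierCoef n f S * chi n S x := by
  have : ∀ S : Finset (Fin n), fourierCoef n f S * chi n S x
      = bExp n (fun y => f y * (chi n S y * chi n S x)) := by
    intro S
    rw [fourierCoef, mul_comm, ← bExp_smul]
    congr 1; ext y; ring
  simp only [this]
  rw [← bExp_sum]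
  have : (fun y => ∑ S : Finset (Fin n), f y * (chi n S y * chi n S x))
      = fun y => f y * (if y = x then (2:ℝ)^n else 0) := by
    ext y
    rw [← Finset.mul_sum, sum_chi_chi]
  rw [this, bExp]
  rw [Finset.sum_eq_single x (by intro b _ hb; simp [hb]) (by simp)]
  simp

lemma bExp_mul_eq_sum (f g : (Fin n → Bool) → ℝ) :
    bExp n (fun x => f x * g x) = ∑ S : Finset (Fin n), fourierCoef n f S * fourierCoef n g S := by
  have : (fun x => f x * g x)
      = fun x => ∑ S : Finset (Fin n), fourierCoef n g S * (f x * chi n S x) := by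
    ext x
    rw [fourier_inversion g x, Finset.mul_sum]
    exact Finset.sum_congr rfl fun S _ => by ring
  rw [this, bExp_sum]
  refine Finset.sum_congr rfl fun S _ => ?_
  rw [bExp_smul, fourierCoef, fourierCoef]; ring

lemma fourierCoef_bP (t : ℝ) (f : (Fin n → Bool) → ℝ) (T : Finset (Fin n)) :
    fourierCoef n (bP n t f) T = Real.exp (-t * T.card) * fourierCoef n f T := by
  rw [fourierCoef]
  simp only [bP]
  have : (fun x => (∑ S : Finset (Fin n), Real.exp (-t * S.card) * fourierCoef n f S * chi n S x) * chi n T x)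
      = fun x => ∑ S : Finset (Fin n), (Real.exp (-t * S.card) * fourierCoef n f S) * (chi n S x * chi n T x) := by
    ext x; rw [Finset.sum_mul]; congr 1; ext S; ring
  rw [this, bExp_sum]
  rw [Finset.sum_eq_single T ?_ (by simp)]
  · rw [bExp_smul, bExp_chi_mul_chi, if_pos rfl, mul_one]
  · intro S _ hS
    rw [bExp_smul, bExp_chi_mul_chi, if_neg hS, mul_zero]

lemma bCov_eq (f h : (Fin n → Bool) → ℝ) :
    bCov n f h = bExp n (fun x => (f x - bExp n f) * h x) := by
  rw [bCov]
  have : (fun x => (f x - bExp n f) * (h x - bExp n h))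
      = fun x => (f x - bExp n f) * h x - ((f x - bExp n f) * bExp n h) := by
    ext x; ring
  rw [this, bExp_sub]
  have : (fun x => (f x - bExp n f) * bExp n h) = fun x => bExp n h * (f x - bExp n f) := by
    ext x; ring
  rw [this, bExp_smul, bExp_sub, bExp_const]
  simp

lemma bVar_eq (f : (Fin n → Bool) → ℝ) :
    bVar n f = (∑ S : Finset (Fin n), (fourierCoef n f S)^2) - (fourierCoef n f ∅)^2 := by
  rw [bVar, bCov_eq]
  have : (fun x => (f x - bExp n f) * f x) = fun x => f x * f x - bExp n f * f x := by
    ext x; ring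
  rw [this, bExp_sub, bExp_smul, bExp_mul_eq_sum, fourierCoef_empty]
  congr 1
  · congr 1; ext S; rw [sq]
  · rw [sq]
end four

-- MB PART
section mb
variable {n : ℕ}

lemma bCov_add₂ (g h1 h2 : (Fin n → Bool) → ℝ) :
    bCov n g (fun x => h1 x + h2 x) = bCov n g h1 + bCov n g h2 := by
  simp only [bCov_eq]
  rw [← bExp_add]
  congr 1; ext x; ring

lemma bCov_sub₂ (g h1 h2 : (Fin n → Bool) → ℝ) :
    bCov n g (fun x => h1 x - h2 x) = bCov n g h1 - bCov n g h2 := by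
  simp only [bCov_eq]
  rw [← bExp_sub]
  congr 1; ext x; ring

lemma bCov_smul₂ (g h : (Fin n → Bool) → ℝ) (a : ℝ) :
    bCov n g (fun x => a * h x) = a * bCov n g h := by
  simp only [bCov_eq]
  rw [← bExp_smul]
  congr 1; ext x; ring

lemma bExp_center (g : (Fin n → Bool) → ℝ) : bExp n (fun x => g x - bExp n g) = 0 := by
  rw [bExp_sub g (fun _ => bExp n g), bExp_const, sub_self]

lemma bCov_const₂ (g : (Fin n → Bool) → ℝ) (a : ℝ) : bCov n g (fun _ => a) = 0 := by
  rw [bCov_eq]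
  have : (fun x => (g x - bExp n g) * a) = fun x => a * (g x - bExp n g) := by ext x; ring
  rw [this, bExp_smul, bExp_center, mul_zero]

lemma bCov_sum₂ {ι : Type*} (g : (Fin n → Bool) → ℝ) (s : Finset ι)
    (H : ι → (Fin n → Bool) → ℝ) :
    bCov n g (fun x => ∑ k ∈ s, H k x) = ∑ k ∈ s, bCov n g (H k) := by
  simp only [bCov_eq]
  rw [← bExp_sum]
  congr 1; ext x; rw [Finset.mul_sum]

instance : Nonempty {A : Set (Fin n → Bool) // IsHalfspaceB A} :=
  ⟨⟨∅, ⟨0, -1, by ext x; simp⟩⟩⟩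

lemma Mb_bdd (g : (Fin n → Bool) → ℝ) :
    BddAbove (Set.range fun A : {A : Set (Fin n → Bool) // IsHalfspaceB A} =>
      bCov n g (Set.indicator A.1 1)) :=
  Set.Finite.bddAbove (Set.finite_range _)

lemma bCov_le_Mb (g : (Fin n → Bool) → ℝ) (A : Set (Fin n → Bool)) (hA : IsHalfspaceB A) :
    bCov n g (Set.indicator A 1) ≤ Mb n g :=
  le_ciSup (Mb_bdd g) (⟨A, hA⟩ : {A : Set (Fin n → Bool) // IsHalfspaceB A})

lemma Mb_nonneg (g : (Fin n → Bool) → ℝ) : 0 ≤ Mb n g := by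
  have h := bCov_le_Mb g ∅ ⟨0, -1, by ext x; simp⟩
  rw [Set.indicator_empty] at h
  have h2 : bCov n g (fun _ => (0:ℝ)) = 0 := bCov_const₂ g 0
  linarith [h, h2]

end mb

-- GRID PART
section grid

noncomputable def clamp2 (v : ℝ) : ℝ := max (-2) (min 2 v)

lemma clamp2_abs (v : ℝ) : |v - clamp2 v| ≤ v^2/2 := by
  rcases le_total 2 v with h | h
  · have : clamp2 v = 2 := by
      rw [clamp2, min_eq_left h]; norm_num
    rw [this, abs_of_nonneg (by linarith)]
    nlinarith
  rcases le_total v (-2) with h' | h'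
  · have : clamp2 v = -2 := by
      rw [clamp2, min_eq_right (by linarith), max_eq_left h']
    rw [this, abs_of_nonpos (by linarith)]
    nlinarith
  · have : clamp2 v = v := by
      rw [clamp2, min_eq_right h, max_eq_right h']
    rw [this, sub_self, abs_zero]
    positivity

lemma grid_card (N : ℕ) (hN : 0 < N) (v : ℝ) :
    clamp2 v - 4/N ≤ 4 * ((Finset.range N).filter
        (fun k : ℕ => (-2 : ℝ) + 4*((k:ℝ)+1)/N ≤ v)).card / N - 2 ∧
    4 * ((Finset.range N).filter (fun k : ℕ => (-2 : ℝ) + 4*((k:ℝ)+1)/N ≤ v)).card / N - 2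
      ≤ clamp2 v := by
  have hNR : (0:ℝ) < N := by exact_mod_cast hN
  have h4N : (0:ℝ) ≤ 4/N := by positivity
  rcases lt_or_ge v (-2) with hv | hv
  · have hfilter : (Finset.range N).filter (fun k : ℕ => (-2 : ℝ) + 4*((k:ℝ)+1)/N ≤ v) = ∅ := by
      apply Finset.filter_false_of_mem
      intro k _
      have hpos : (0:ℝ) < 4*((k:ℝ)+1)/N := div_pos (by positivity) hNR
      push_neg
      linarith
    have hc : clamp2 v = -2 := by
      rw [clamp2, min_eq_right (by linarith), max_eq_left (by linarith)]
    rw [hfilter, hc]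
    simp only [Finset.card_empty, Nat.cast_zero, mul_zero, zero_div]
    constructor <;> linarith
  · -- v + 2 ≥ 0
    have hv2 : (0:ℝ) ≤ N*(v+2)/4 := div_nonneg (by nlinarith) (by norm_num)
    set M0 := Nat.floor ((N:ℝ)*(v+2)/4) with hM0
    have hfilter : (Finset.range N).filter (fun k : ℕ => (-2 : ℝ) + 4*((k:ℝ)+1)/N ≤ v)
        = Finset.range (min N M0) := by
      ext k
      simp only [Finset.mem_filter, Finset.mem_range, lt_min_iff]
      constructor
      · rintro ⟨hk, hcond⟩
        refine ⟨hk, ?_⟩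
        have h' : (4*((k:ℝ)+1))/N ≤ v + 2 := by
          have : 4*((k:ℝ)+1)/N ≤ v + 2 := by linarith
          linarith [this]
        have h'' := (div_le_iff₀ hNR).mp h'
        have h1 : ((k+1 : ℕ) : ℝ) ≤ N*(v+2)/4 := by
          push_cast
          rw [le_div_iff₀ (by norm_num : (0:ℝ) < 4)]
          nlinarith
        have := (Nat.le_floor_iff hv2).mpr h1
        omega
      · rintro ⟨hk, hkM⟩
        refine ⟨hk, ?_⟩
        have h1 : ((k+1 : ℕ) : ℝ) ≤ N*(v+2)/4 := by
          apply (Nat.le_floor_iff hv2).mp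
          omega
        push_cast at h1
        rw [le_div_iff₀ (by norm_num : (0:ℝ) < 4)] at h1
        have : 4*((k:ℝ)+1)/N ≤ v + 2 := by
          rw [div_le_iff₀ hNR]
          nlinarith
        linarith
    rw [hfilter, Finset.card_range]
    rcases le_or_gt 2 v with h2 | h2
    · have hM0N : N ≤ M0 := by
        apply (Nat.le_floor_iff hv2).mpr
        rw [le_div_iff₀ (by norm_num : (0:ℝ) < 4)]
        nlinarith
      rw [min_eq_left hM0N]
      have hc : clamp2 v = 2 := by rw [clamp2, min_eq_left h2]; norm_num
      rw [hc]
      have he : 4 * (N:ℝ)/N - 2 = 2 := by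
        rw [mul_div_assoc, div_self (ne_of_gt hNR)]; norm_num
      rw [he]
      constructor <;> linarith
    · have hM0lt : M0 < N := by
        have h1 : (M0 : ℝ) ≤ N*(v+2)/4 := Nat.floor_le hv2
        have h2' : (N:ℝ)*(v+2)/4 < N := by
          rw [div_lt_iff₀ (by norm_num : (0:ℝ) < 4)]
          nlinarith
        exact_mod_cast lt_of_le_of_lt h1 h2'
      rw [min_eq_right (le_of_lt hM0lt)]
      have hc : clamp2 v = v := by
        rw [clamp2, min_eq_right (le_of_lt h2), max_eq_right (by linarith)]
      rw [hc]
      have hup : (M0:ℝ) ≤ N*(v+2)/4 := Nat.floor_le hv2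
      have hlow : (N:ℝ)*(v+2)/4 < M0 + 1 := Nat.lt_floor_add_one _
      have hup4 : 4*(M0:ℝ) ≤ N*(v+2) := by nlinarith
      have hlow4 : (N:ℝ)*(v+2) < 4*M0 + 4 := by nlinarith
      constructor
      · rw [← sub_nonneg]
        have he : 4*(M0:ℝ)/N - 2 - (v - 4/N) = (4*M0 + 4 - N*(v+2))/N := by
          field_simp; ring
        rw [he]
        exact div_nonneg (by linarith) (le_of_lt hNR)
      · rw [← sub_nonneg]
        have he : v - (4*(M0:ℝ)/N - 2) = (N*(v+2) - 4*M0)/N := by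
          field_simp; ring
        rw [he]
        exact div_nonneg (by linarith) (le_of_lt hNR)

end grid

-- MAIN1 PART
section main1
variable {n : ℕ}

lemma chi_singleton_fun (i : Fin n) : chi n {i} = fun x => bval (x i) := by
  ext x; simp [chi]

lemma bExp_bval (i : Fin n) : bExp n (fun x => bval (x i)) = 0 := by
  have h := bExp_chi (n := n) {i}
  rw [if_neg (Finset.singleton_ne_empty i), chi_singleton_fun] at h
  exact h

lemma bCov_bval (g : (Fin n → Bool) → ℝ) (i : Fin n) :
    bCov n g (fun x => bval (x i)) = fourierCoef n g {i} := by
  rw [bCov_eq]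
  have : (fun x => (g x - bExp n g) * bval (x i))
      = fun x => g x * bval (x i) - bExp n g * bval (x i) := by ext x; ring
  rw [this, bExp_sub (fun x => g x * bval (x i)) (fun x => bExp n g * bval (x i)),
    bExp_smul, bExp_bval, mul_zero, sub_zero, fourierCoef, chi_singleton_fun]

lemma w1_le_Mb (g : (Fin n → Bool) → ℝ) (hg : ∀ x, g x ∈ Set.Icc (0:ℝ) 1) :
    w1b n g ≤ 8 * Mb n g := by
  classical
  set c : Fin n → ℝ := fun i => fourierCoef n g {i} with hc
  set L : (Fin n → Bool) → ℝ := fun x => ∑ i, c i * bval (x i) with hL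
  set σ2 : ℝ := ∑ i, (c i)^2 with hσ2
  have hw1 : w1b n g = σ2 := rfl
  have hEg0 : 0 ≤ bExp n g := by
    have h := bExp_mono (n := n) (f := fun _ => (0:ℝ)) (g := g) (fun x => (hg x).1)
    rwa [bExp_const] at h
  have hEg1 : bExp n g ≤ 1 := by
    have h := bExp_mono (n := n) (f := g) (g := fun _ => (1:ℝ)) (fun x => (hg x).2)
    rwa [bExp_const] at h
  have habs : ∀ x, |g x - bExp n g| ≤ 1 := by
    intro x
    rw [abs_le]
    constructor
    · linarith [(hg x).1]
    · linarith [(hg x).2]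
  have hCovL : bCov n g L = σ2 := by
    rw [hL]
    rw [bCov_sum₂ g Finset.univ (fun i x => c i * bval (x i))]
    refine Finset.sum_congr rfl fun i _ => ?_
    rw [bCov_smul₂, bCov_bval, sq]
  have hL2 : bExp n (fun x => L x * L x) = σ2 := by
    have hexp : (fun x => L x * L x)
        = fun x => ∑ i : Fin n, ∑ j : Fin n, (c i * c j) * (chi n {i} x * chi n {j} x) := by
      ext x
      rw [hL, Finset.sum_mul_sum]
      refine Finset.sum_congr rfl fun i _ => Finset.sum_congr rfl fun j _ => ?_
      simp [chi]; ring
    rw [hexp, bExp_sum]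
    rw [hσ2]
    refine Finset.sum_congr rfl fun i _ => ?_
    rw [bExp_sum]
    rw [Finset.sum_eq_single i ?h1 (by simp)]
    · rw [bExp_smul, bExp_chi_mul_chi, if_pos rfl, mul_one, sq]
    · intro j _ hj
      rw [bExp_smul, bExp_chi_mul_chi, if_neg (by simp [Finset.singleton_inj]; exact fun h => hj h.symm), mul_zero]
  -- covariance with clamp
  have hcov_clamp : σ2/2 ≤ bCov n g (fun x => clamp2 (L x)) := by
    have hsplit : bCov n g L
        = bCov n g (fun x => clamp2 (L x)) + bCov n g (fun x => L x - clamp2 (L x)) := by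
      rw [← bCov_add₂]
      congr 1
      ext x; ring
    have hrem : bCov n g (fun x => L x - clamp2 (L x)) ≤ σ2/2 := by
      have h1 : bCov n g (fun x => L x - clamp2 (L x))
          ≤ |bCov n g (fun x => L x - clamp2 (L x))| := le_abs_self _
      have h2 : |bCov n g (fun x => L x - clamp2 (L x))|
          ≤ bExp n (fun x => |(g x - bExp n g) * (L x - clamp2 (L x))|) := by
        rw [bCov_eq]
        exact abs_bExp_le _
      have h3 : bExp n (fun x => |(g x - bExp n g) * (L x - clamp2 (L x))|)
          ≤ bExp n (fun x => (L x)^2/2) := by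
        apply bExp_mono
        intro x
        rw [abs_mul]
        calc |g x - bExp n g| * |L x - clamp2 (L x)| ≤ 1 * ((L x)^2/2) := by
              apply mul_le_mul (habs x) (clamp2_abs (L x)) (abs_nonneg _) (by norm_num)
          _ = (L x)^2/2 := one_mul _
      have h4 : bExp n (fun x => (L x)^2/2) = σ2/2 := by
        have : (fun x => (L x)^2/2) = fun x => (1/2) * (L x * L x) := by ext x; ring
        rw [this, bExp_smul, hL2]; ring
      linarith
    linarith [hCovL]
  -- grid approximation
  have key : ∀ N : ℕ, 0 < N → σ2/2 ≤ 4 * Mb n g + 4/N := by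
    intro N hN
    have hNR : (0:ℝ) < N := by exact_mod_cast hN
    set A : ℕ → Set (Fin n → Bool) :=
      fun k => {x | ∑ i, (-(c i)) * bval (x i) ≤ -((-2:ℝ) + 4*((k:ℝ)+1)/N)} with hA
    have hAhs : ∀ k, IsHalfspaceB (A k) := fun k => ⟨_, _, rfl⟩
    have hsumneg : ∀ x, ∑ i, (-(c i)) * bval (x i) = -(L x) := by
      intro x
      rw [hL, ← Finset.sum_neg_distrib]
      refine Finset.sum_congr rfl fun i _ => by ring
    have hmem : ∀ k x, (x ∈ A k) ↔ ((-2:ℝ) + 4*((k:ℝ)+1)/N ≤ L x) := by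
      intro k x
      rw [hA]
      simp only [Set.mem_setOf_eq, hsumneg x, neg_le_neg_iff]
    have hind : ∀ k x, Set.indicator (A k) (1 : (Fin n → Bool) → ℝ) x
        = if (-2:ℝ) + 4*((k:ℝ)+1)/N ≤ L x then 1 else 0 := by
      intro k x
      rw [Set.indicator_apply]
      by_cases h : x ∈ A k
      · rw [if_pos h, if_pos ((hmem k x).mp h)]
        rfl
      · rw [if_neg h, if_neg (fun hcc => h ((hmem k x).mpr hcc))]
    set hfun : (Fin n → Bool) → ℝ :=
      fun x => (4/N) * (∑ k ∈ Finset.range N, Set.indicator (A k) (1:(Fin n → Bool) → ℝ) x) - 2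
      with hhfun
    have hcov_hfun : bCov n g hfun ≤ 4 * Mb n g := by
      have e1 : bCov n g hfun
          = (4/N) * (∑ k ∈ Finset.range N, bCov n g (Set.indicator (A k) 1)) := by
        rw [hhfun]
        rw [bCov_sub₂ g _ (fun _ => (2:ℝ)), bCov_const₂, sub_zero, bCov_smul₂,
          bCov_sum₂ g (Finset.range N) (fun k => Set.indicator (A k) 1)]
      have e2 : ∑ k ∈ Finset.range N, bCov n g (Set.indicator (A k) 1) ≤ N * Mb n g := by
        calc ∑ k ∈ Finset.range N, bCov n g (Set.indicator (A k) 1)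
            ≤ ∑ k ∈ Finset.range N, Mb n g :=
              Finset.sum_le_sum fun k _ => bCov_le_Mb g (A k) (hAhs k)
          _ = N * Mb n g := by rw [Finset.sum_const, Finset.card_range, nsmul_eq_mul]
      rw [e1]
      calc (4/(N:ℝ)) * (∑ k ∈ Finset.range N, bCov n g (Set.indicator (A k) 1))
          ≤ (4/N) * (N * Mb n g) := by
            apply mul_le_mul_of_nonneg_left e2 (by positivity)
        _ = 4 * Mb n g := by field_simp
    have hclose : bCov n g (fun x => clamp2 (L x)) ≤ bCov n g hfun + 4/N := by
      have hptw : ∀ x, |clamp2 (L x) - hfun x| ≤ 4/N := by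
        intro x
        have hcount : hfun x = 4 * (((Finset.range N).filter
            (fun k : ℕ => (-2:ℝ) + 4*((k:ℝ)+1)/N ≤ L x)).card : ℝ) / N - 2 := by
          rw [hhfun]
          simp only [hind]
          rw [Finset.sum_boole]
          ring
        obtain ⟨hg1, hg2⟩ := grid_card N hN (L x)
        rw [hcount, abs_le]
        constructor
        · linarith
        · linarith
      have hd : bCov n g (fun x => clamp2 (L x)) - bCov n g hfun
          = bCov n g (fun x => clamp2 (L x) - hfun x) := (bCov_sub₂ g _ hfun).symm
      have habsd : bCov n g (fun x => clamp2 (L x) - hfun x) ≤ 4/N := by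
        have h1 := le_abs_self (bCov n g (fun x => clamp2 (L x) - hfun x))
        have h2 : |bCov n g (fun x => clamp2 (L x) - hfun x)|
            ≤ bExp n (fun x => |(g x - bExp n g) * (clamp2 (L x) - hfun x)|) := by
          rw [bCov_eq]
          exact abs_bExp_le _
        have h3 : bExp n (fun x => |(g x - bExp n g) * (clamp2 (L x) - hfun x)|)
            ≤ bExp n (fun _ => 4/(N:ℝ)) := by
          apply bExp_mono
          intro x
          rw [abs_mul]
          calc |g x - bExp n g| * |clamp2 (L x) - hfun x| ≤ 1 * (4/N) := by
                apply mul_le_mul (habs x) (hptw x) (abs_nonneg _) (by norm_num)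
            _ = 4/N := one_mul _
        rw [bExp_const] at h3
        linarith
      linarith
    linarith [hcov_clamp, hclose, hcov_hfun]
  -- conclusion
  rw [hw1]
  by_contra hcon
  push_neg at hcon
  have hpos : 0 < σ2/2 - 4*Mb n g := by linarith
  obtain ⟨N, hNgt⟩ := exists_nat_gt (4 / (σ2/2 - 4*Mb n g))
  have hN0 : 0 < N := by
    have h0 : (0:ℝ) < 4 / (σ2/2 - 4*Mb n g) := by positivity
    have : (0:ℝ) < N := lt_trans h0 hNgt
    exact_mod_cast this
  have hk := key N hN0
  have hNR : (0:ℝ) < N := by exact_mod_cast hN0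
  have h4N : 4/(N:ℝ) < σ2/2 - 4*Mb n g := by
    rw [div_lt_iff₀ hNR]
    rw [div_lt_iff₀ hpos] at hNgt
    linarith [hNgt]
  linarith

end main1

-- RESTRICTION PART
section rest
variable {n : ℕ}

lemma restExp_sum {ι : Type*} (s : ℝ) (u : Finset ι) (F : ι → (Fin n → Option Bool) → ℝ) :
    restExp n s (fun z => ∑ k ∈ u, F k z) = ∑ k ∈ u, restExp n s (F k) := by
  simp only [restExp, Finset.mul_sum]
  rw [Finset.sum_comm]

lemma restExp_smul (s : ℝ) (a : ℝ) (F : (Fin n → Option Bool) → ℝ) :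
    restExp n s (fun z => a * F z) = a * restExp n s F := by
  simp only [restExp, Finset.mul_sum]
  refine Finset.sum_congr rfl fun z _ => by ring

lemma muWeight_nonneg (s : ℝ) (hs : Real.exp (-s) ≤ 1) (z : Fin n → Option Bool) :
    0 ≤ muWeight n s z := by
  apply Finset.prod_nonneg
  intro i _
  by_cases h : z i = none
  · rw [if_pos h]; positivity
  · rw [if_neg h]; linarith

lemma restExp_mono (s : ℝ) (hs : Real.exp (-s) ≤ 1) {F G : (Fin n → Option Bool) → ℝ}
    (h : ∀ z, F z ≤ G z) : restExp n s F ≤ restExp n s G :=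
  Finset.sum_le_sum fun z _ => mul_le_mul_of_nonneg_left (h z) (muWeight_nonneg s hs z)

lemma restExp_prod (s : ℝ) (u : Fin n → Option Bool → ℝ) :
    restExp n s (fun z => ∏ j, u j (z j))
      = ∏ j, (Real.exp (-s) * u j none + (1 - Real.exp (-s))/2 * u j (some true)
          + (1 - Real.exp (-s))/2 * u j (some false)) := by
  rw [restExp]
  have h1 : ∀ z : Fin n → Option Bool, muWeight n s z * ∏ j, u j (z j)
      = ∏ j, ((if z j = none then Real.exp (-s) else (1 - Real.exp (-s))/2) * u j (z j)) := by
    intro z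
    rw [muWeight, ← Finset.prod_mul_distrib]
  simp only [h1]
  rw [← Fintype.prod_sum (fun j o => (if o = none then Real.exp (-s) else (1 - Real.exp (-s))/2) * u j o)]
  refine Finset.prod_congr rfl fun j _ => ?_
  rw [Fintype.sum_option, Fintype.sum_bool]
  rw [if_pos rfl, if_neg (by simp : ¬(some true = (none : Option Bool))),
    if_neg (by simp : ¬(some false = (none : Option Bool)))]
  ring

noncomputable def aFac (S : Finset (Fin n)) (i j : Fin n) (o : Option Bool) : ℝ :=
  if j = i then (if j ∈ S then (if o = none then 1 else 0) else 0)
  else (if j ∈ S then o.elim 0 bval else 1)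

lemma aFac_eq (S : Finset (Fin n)) (i j : Fin n) (o : Option Bool) :
    ((if j ∈ S then bval (o.getD true) else 1) * (if j = i then bval true else 1)
      + (if j ∈ S then bval (o.getD false) else 1) * (if j = i then bval false else 1))/2
    = aFac S i j o := by
  by_cases h1 : j = i
  · subst h1
    by_cases h2 : j ∈ S <;> rcases o with _ | b <;>
      simp [aFac, h2, bval] <;> (try cases b) <;> simp [bval] <;> norm_num
  · by_cases h2 : j ∈ S <;> rcases o with _ | b <;>
      simp [aFac, h1, h2, bval] <;> (try cases b) <;> simp [bval] <;> norm_num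

lemma restrict_coef (f : (Fin n → Bool) → ℝ) (z : Fin n → Option Bool) (i : Fin n) :
    fourierCoef n (restrictF f z) {i}
      = ∑ S : Finset (Fin n), fourierCoef n f S * ∏ j, aFac S i j (z j) := by
  classical
  rw [fourierCoef]
  have h1 : (fun x => restrictF f z x * chi n {i} x)
      = fun x => ∑ S : Finset (Fin n),
          fourierCoef n f S * (chi n S (oslash z x) * bval (x i)) := by
    ext x
    rw [restrictF, fourier_inversion f (oslash z x), chi_singleton_fun, Finset.sum_mul]
    refine Finset.sum_congr rfl fun S _ => by ring
  rw [h1, bExp_sum]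
  refine Finset.sum_congr rfl fun S _ => ?_
  rw [bExp_smul]
  congr 1
  have h2 : (fun x : Fin n → Bool => chi n S (oslash z x) * bval (x i))
      = fun x => ∏ j, ((if j ∈ S then bval ((z j).getD (x j)) else 1)
          * (if j = i then bval (x j) else 1)) := by
    ext x
    rw [Finset.prod_mul_distrib]
    congr 1
    · rw [Finset.prod_ite_mem Finset.univ S (fun j => bval ((z j).getD (x j))),
        Finset.univ_inter]
      rfl
    · rw [Finset.prod_ite_eq' Finset.univ i (fun j => bval (x j)), if_pos (Finset.mem_univ i)]
  rw [h2, bExp_prod (fun j b => (if j ∈ S then bval ((z j).getD b) else 1)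
      * (if j = i then bval b else 1))]
  exact Finset.prod_congr rfl fun j _ => aFac_eq S i j (z j)

noncomputable def mFac (ρ : ℝ) (S T : Finset (Fin n)) (i j : Fin n) : ℝ :=
  if j = i then (if i ∈ S ∧ i ∈ T then ρ else 0)
  else (if j ∈ S then (if j ∈ T then 1 - ρ else 0) else (if j ∈ T then 0 else 1))

lemma mFac_eq (ρ : ℝ) (S T : Finset (Fin n)) (i j : Fin n) :
    ρ * (aFac S i j none * aFac T i j none)
      + (1 - ρ)/2 * (aFac S i j (some true) * aFac T i j (some true))
      + (1 - ρ)/2 * (aFac S i j (some false) * aFac T i j (some false))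
    = mFac ρ S T i j := by
  by_cases h1 : j = i
  · subst h1
    by_cases h2 : j ∈ S <;> by_cases h3 : j ∈ T <;>
      simp [aFac, mFac, h2, h3, bval] <;> ring
  · by_cases h2 : j ∈ S <;> by_cases h3 : j ∈ T <;>
      simp [aFac, mFac, h1, h2, h3, bval] <;> ring

lemma prod_mFac (ρ : ℝ) (S T : Finset (Fin n)) (i : Fin n) :
    ∏ j, mFac ρ S T i j
      = if S = T ∧ i ∈ S then ρ * (1-ρ)^(S.card - 1) else 0 := by
  classical
  by_cases hST : S = T
  · subst hST
    by_cases hiS : i ∈ S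
    · rw [if_pos ⟨rfl, hiS⟩]
      rw [← Finset.mul_prod_erase Finset.univ _ (Finset.mem_univ i)]
      have hi : mFac ρ S S i i = ρ := by
        rw [mFac, if_pos rfl, if_pos ⟨hiS, hiS⟩]
      rw [hi]
      congr 1
      have h2 : ∀ j ∈ Finset.univ.erase i, mFac ρ S S i j
          = (if j ∈ S then 1 - ρ else 1) := by
        intro j hj
        have hji : j ≠ i := (Finset.mem_erase.mp hj).1
        rw [mFac, if_neg hji]
        by_cases h : j ∈ S <;> simp [h]
      rw [Finset.prod_congr rfl h2, Finset.prod_ite_mem, Finset.prod_const]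
      congr 1
      have : Finset.univ.erase i ∩ S = S.erase i := by
        ext j
        simp [Finset.mem_erase, and_comm]
      rw [this, Finset.card_erase_of_mem hiS]
    · rw [if_neg (fun h => hiS h.2)]
      apply Finset.prod_eq_zero (Finset.mem_univ i)
      rw [mFac, if_pos rfl, if_neg (fun h => hiS h.1)]
  · rw [if_neg (fun h => hST h.1)]
    have : ∃ j, (j ∈ S ∧ j ∉ T) ∨ (j ∉ S ∧ j ∈ T) := by
      by_contra h
      push_neg at h
      apply hST
      ext j
      have := h j
      tauto
    obtain ⟨j, hj⟩ := this
    apply Finset.prod_eq_zero (Finset.mem_univ j)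
    by_cases hji : j = i
    · subst hji
      rw [mFac, if_pos rfl, if_neg (by tauto)]
    · rw [mFac, if_neg hji]
      rcases hj with ⟨h1, h2⟩ | ⟨h1, h2⟩
      · rw [if_pos h1, if_neg h2]
      · rw [if_neg h1, if_pos h2]

lemma restExp_coef_sq (s : ℝ) (f : (Fin n → Bool) → ℝ) (i : Fin n) :
    restExp n s (fun z => (fourierCoef n (restrictF f z) {i})^2)
      = ∑ S : Finset (Fin n), (fourierCoef n f S)^2
          * (if i ∈ S then Real.exp (-s) * (1 - Real.exp (-s))^(S.card - 1) else 0) := by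
  classical
  have h1 : (fun z : Fin n → Option Bool => (fourierCoef n (restrictF f z) {i})^2)
      = fun z => ∑ S : Finset (Fin n), ∑ T : Finset (Fin n),
          (fourierCoef n f S * fourierCoef n f T)
            * ∏ j, (aFac S i j (z j) * aFac T i j (z j)) := by
    ext z
    rw [sq, restrict_coef, Finset.sum_mul_sum]
    refine Finset.sum_congr rfl fun S _ => Finset.sum_congr rfl fun T _ => ?_
    rw [Finset.prod_mul_distrib]
    ring
  rw [h1, restExp_sum]
  refine Finset.sum_congr rfl fun S _ => ?_
  rw [restExp_sum]
  have h2 : ∀ T : Finset (Fin n),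
      restExp n s (fun z => (fourierCoef n f S * fourierCoef n f T)
        * ∏ j, (aFac S i j (z j) * aFac T i j (z j)))
      = (fourierCoef n f S * fourierCoef n f T)
        * (if S = T ∧ i ∈ S then Real.exp (-s) * (1 - Real.exp (-s))^(S.card - 1) else 0) := by
    intro T
    rw [restExp_smul]
    congr 1
    rw [restExp_prod s (fun j o => aFac S i j o * aFac T i j o)]
    rw [← prod_mFac (Real.exp (-s)) S T i]
    exact Finset.prod_congr rfl fun j _ => mFac_eq (Real.exp (-s)) S T i j
  simp only [h2]
  rw [Finset.sum_eq_single S ?hT (by simp)]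
  · by_cases hiS : i ∈ S
    · rw [if_pos ⟨rfl, hiS⟩, if_pos hiS, sq]
    · rw [if_neg (fun h => hiS h.2), if_neg hiS]
      ring
  · intro T _ hT
    rw [if_neg (fun h => hT h.1.symm), mul_zero]

lemma restExp_w1 (s : ℝ) (f : (Fin n → Bool) → ℝ) :
    restExp n s (fun z => w1b n (restrictF f z))
      = ∑ S : Finset (Fin n), (fourierCoef n f S)^2
          * (S.card * (Real.exp (-s) * (1 - Real.exp (-s))^(S.card - 1))) := by
  classical
  have h1 : (fun z : Fin n → Option Bool => w1b n (restrictF f z))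
      = fun z => ∑ i : Fin n, (fourierCoef n (restrictF f z) {i})^2 := rfl
  rw [h1, restExp_sum]
  simp only [restExp_coef_sq]
  rw [Finset.sum_comm]
  refine Finset.sum_congr rfl fun S _ => ?_
  rw [← Finset.mul_sum]
  congr 1
  rw [Finset.sum_ite_mem, Finset.univ_inter, Finset.sum_const, nsmul_eq_mul]

end rest

theorem stmt10 : ∃ c : ℝ, 0 < c ∧ ∀ (n : ℕ) (f : (Fin n → Bool) → ℝ) (t : ℝ),
    (∀ x, f x ∈ Set.Icc (0:ℝ) 1) → 0 < t →
    restExp n (-Real.log (1 - Real.exp (-t))) (fun z => Mb n (restrictF f z)) ≥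
      c * (Real.exp (2*t) - 1) * bVar n (bP n t f) := by
  classical
  refine ⟨1/16, by norm_num, ?_⟩
  intro n f t hf ht
  set s : ℝ := -Real.log (1 - Real.exp (-t)) with hs
  set u : ℝ := Real.exp (-t) with hu
  have hu0 : 0 < u := Real.exp_pos _
  have hu1 : u < 1 := by
    rw [hu]
    exact Real.exp_lt_one_iff.mpr (by linarith)
  have hρ : Real.exp (-s) = 1 - u := by
    rw [hs, neg_neg, Real.exp_log (by linarith : (0:ℝ) < 1 - u)]
  have hρ1 : Real.exp (-s) ≤ 1 := by rw [hρ]; linarith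
  -- step 1 : E[M] ≥ (1/8) E[w1]
  have hM : ∀ z : Fin n → Option Bool,
      (1/8) * w1b n (restrictF f z) ≤ Mb n (restrictF f z) := by
    intro z
    have h := w1_le_Mb (restrictF f z) (fun x => hf _)
    linarith
  have h1 := restExp_mono s hρ1 hM
  rw [restExp_smul] at h1
  -- step 2 : value of E[w1]
  have h2 : restExp n s (fun z => w1b n (restrictF f z))
      = ∑ S : Finset (Fin n), (fourierCoef n f S)^2
          * (S.card * ((1-u) * u^(S.card - 1))) := by
    rw [restExp_w1, hρ]
    refine Finset.sum_congr rfl fun S _ => ?_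
    rw [show (1:ℝ) - (1 - u) = u by ring]
  -- step 3 : variance of P_t f
  have h3 : bVar n (bP n t f)
      = (∑ S : Finset (Fin n), (Real.exp (-t * S.card) * fourierCoef n f S)^2)
        - (fourierCoef n f ∅)^2 := by
    rw [bVar_eq]
    simp only [fourierCoef_bP]
    congr 1
    rw [Finset.card_empty, Nat.cast_zero, mul_zero, Real.exp_zero, one_mul]
  -- step 4 : termwise comparison
  have h4 : (1/16) * (Real.exp (2*t) - 1) * bVar n (bP n t f)
      ≤ (1/8) * restExp n s (fun z => w1b n (restrictF f z)) := by
    rw [h2, h3]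
    have hsplit : (∑ S : Finset (Fin n), (Real.exp (-t * S.card) * fourierCoef n f S)^2)
        - (fourierCoef n f ∅)^2
        = ∑ S : Finset (Fin n), ((Real.exp (-t * S.card) * fourierCoef n f S)^2
            - (if S = ∅ then (fourierCoef n f S)^2 else 0)) := by
      rw [Finset.sum_sub_distrib]
      congr 1
      rw [Finset.sum_ite_eq' Finset.univ ∅ (fun S => (fourierCoef n f S)^2),
        if_pos (Finset.mem_univ _)]
    rw [hsplit, Finset.mul_sum, Finset.mul_sum]
    refine Finset.sum_le_sum fun S _ => ?_
    by_cases hS : S = ∅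
    · subst hS
      rw [if_pos rfl]
      simp [Real.exp_zero]
    · rw [if_neg hS, sub_zero]
      set a : ℝ := fourierCoef n f S with ha
      have hk1 : 1 ≤ S.card := Finset.card_pos.mpr (Finset.nonempty_of_ne_empty hS)
      set w : ℝ := u^(S.card - 1) with hw
      have hw0 : 0 ≤ w := by positivity
      have hw1 : w ≤ 1 := pow_le_one₀ (le_of_lt hu0) (le_of_lt hu1)
      have huk : u^(S.card) = u * w := by
        rw [hw, ← pow_succ']
        congr 1
        omega
      have hexpk : Real.exp (-t * S.card) = u^(S.card) := by
        rw [show -t * (S.card:ℝ) = (S.card:ℝ) * (-t) by ring, Real.exp_nat_mul, hu]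
      have hE2u : Real.exp (2*t) * u^2 = 1 := by
        rw [hu, sq, ← Real.exp_add, ← Real.exp_add]
        rw [show 2*t + (-t + -t) = 0 by ring, Real.exp_zero]
      have h5 : (Real.exp (2*t) - 1) * ((u * w * a)^2) = (1 - u^2) * (w^2 * a^2) := by
        linear_combination (w^2 * a^2 : ℝ) * hE2u
      rw [hexpk, huk]
      have hkR : (1:ℝ) ≤ S.card := by exact_mod_cast hk1
      have h7 : (1 + u) * w ≤ 2 * (S.card : ℝ) := by nlinarith
      have h8 : (0:ℝ) ≤ (1-u) * w := mul_nonneg (by linarith) hw0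
      have key : (1 - u^2) * w^2 ≤ 2 * (S.card:ℝ) * ((1-u) * w) := by
        nlinarith [mul_le_mul_of_nonneg_left h7 h8]
      have hA : (0:ℝ) ≤ a^2 := sq_nonneg a
      nlinarith [mul_le_mul_of_nonneg_right key hA, h5]
  -- conclude
  rw [ge_iff_le]
  calc (1/16) * (Real.exp (2*t) - 1) * bVar n (bP n t f)
      ≤ (1/8) * restExp n s (fun z => w1b n (restrictF f z)) := h4
    _ ≤ restExp n s (fun z => Mb n (restrictF f z)) := h1
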